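/- Let k be a field, let A and B be finitely generated k-algebras, let φ₁, φ₂ : A → B be k-algebra homomorphisms, let J ⊆ B be the ideal generated by all elements φ₁(a) − φ₂(a) for a ∈ A, and let Fix := V(J) ⊆ Spec B. Assume: (i) every fiber of the map Spec B → Spec A, p ↦ φ₂⁻¹(p), is a finite set; (ii) for every maximal ideal m ⊆ A and every p ∈ Fix there exist g ∈ B \ p and n ≥ 1 such that in the localization B_g one has B_g·φ₁(m) ⊆ B_g·φ₂(m) and (B_g·φ₁(m))ⁿ ⊆ (B_g·φ₂(m))ⁿ⁺¹ (i.e. the correspondence is contracting near every closed point of Spec A in a neighborhood of its fixed points). Then Fix is a finite set. -/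

import Mathlib

section Aux

variable {k A B : Type*} [Field k] [CommRing A] [CommRing B] [Algebra k A] [Algebra k B]

lemma aux_algebraMap_finiteType (hB : Algebra.FiniteType k B) :
    (algebraMap k B).FiniteType := by
  have halg : (algebraMap k B).toAlgebra = ‹Algebra k B› :=
    Algebra.algebra_ext _ _ fun r => by rw [RingHom.algebraMap_toAlgebra]
  show @Algebra.FiniteType k B _ _ (algebraMap k B).toAlgebra
  rw [halg]; exact hB

lemma aux_comap_isMaximal (hA : Algebra.FiniteType k A) (hB : Algebra.FiniteType k B)
    (φ : A →ₐ[k] B) (m : Ideal B) (hm : m.IsMaximal) :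
    (m.comap (φ : A →+* B)).IsMaximal := by
  haveI : Algebra.FiniteType k A := hA
  haveI : IsJacobsonRing A := isJacobsonRing_of_finiteType (A := k)
  haveI := hm
  letI : Field (B ⧸ m) := Ideal.Quotient.field m
  set ψ : A →+* B ⧸ m := (Ideal.Quotient.mk m).comp (φ : A →+* B) with hψdef
  have hcomp : ψ.comp (algebraMap k A) = (Ideal.Quotient.mk m).comp (algebraMap k B) := by
    rw [hψdef, RingHom.comp_assoc, φ.comp_algebraMap]
  have hft : ψ.FiniteType := by
    apply RingHom.FiniteType.of_comp_finiteType (f := algebraMap k A)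
    rw [hcomp]
    exact RingHom.FiniteType.comp
      (RingHom.FiniteType.of_surjective _ Ideal.Quotient.mk_surjective)
      (aux_algebraMap_finiteType hB)
  have hfin : ψ.Finite := RingHom.finite_iff_finiteType_of_isJacobsonRing.mpr hft
  have hint : ψ.IsIntegral := hfin.to_isIntegral
  haveI : (⊥ : Ideal (B ⧸ m)).IsMaximal := Ideal.bot_isMaximal
  have hmax := Ideal.isMaximal_comap_of_isIntegral_of_isMaximal' ψ hint ⊥
  have hker : Ideal.comap ψ (⊥ : Ideal (B ⧸ m)) = m.comap (φ : A →+* B) := by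
    rw [hψdef, ← Ideal.comap_comap, ← RingHom.ker_eq_comap_bot, Ideal.mk_ker]
  rwa [hker] at hmax

end Aux

set_option maxHeartbeats 2000000 in
set_option synthInstance.maxHeartbeats 400000 in
/-- An affine correspondence `φ₁, φ₂ : A → B` between finitely generated
`k`-algebras which is quasi-finite (via `φ₂`) and contracting near every closed point of
`Spec A` in a neighborhood of its fixed points has finite fixed-point locus
`Fix = V(J)`, where `J` is generated by `{φ₁ a - φ₂ a}`. -/
theorem stmt11 {k A B : Type*} [Field k] [CommRing A] [CommRing B]
    [Algebra k A] [Algebra k B]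
    (hA : Algebra.FiniteType k A) (hB : Algebra.FiniteType k B)
    (φ₁ φ₂ : A →ₐ[k] B)
    (J : Ideal B) (hJ : J = Ideal.span {b : B | ∃ a : A, b = φ₁ a - φ₂ a})
    (hqf : ∀ p : PrimeSpectrum A,
      (PrimeSpectrum.comap (φ₂ : A →+* B) ⁻¹' {p}).Finite)
    (hcontr : ∀ m : Ideal A, m.IsMaximal →
      ∀ p ∈ PrimeSpectrum.zeroLocus (J : Set B),
      ∃ g : B, g ∉ p.asIdeal ∧ ∃ n : ℕ, 1 ≤ n ∧
        Ideal.map ((algebraMap B (Localization.Away g)).comp (φ₁ : A →+* B)) m ≤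
          Ideal.map ((algebraMap B (Localization.Away g)).comp (φ₂ : A →+* B)) m ∧
        (Ideal.map ((algebraMap B (Localization.Away g)).comp (φ₁ : A →+* B)) m) ^ n ≤
          (Ideal.map ((algebraMap B (Localization.Away g)).comp (φ₂ : A →+* B)) m) ^ (n + 1)) :
    (PrimeSpectrum.zeroLocus (J : Set B)).Finite := by
  classical
  haveI : Algebra.FiniteType k B := hB
  haveI : IsNoetherianRing B := Algebra.FiniteType.isNoetherianRing k B
  haveI : IsJacobsonRing B := isJacobsonRing_of_finiteType (A := k)
  -- Key claim: every point of the fixed locus is a maximal ideal.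
  have key : ∀ p : PrimeSpectrum B, p ∈ PrimeSpectrum.zeroLocus (J : Set B) →
      p.asIdeal.IsMaximal := by
    intro p hp
    rw [PrimeSpectrum.mem_zeroLocus] at hp
    have hPprime : p.asIdeal.IsPrime := p.isPrime
    obtain ⟨m', hm', hPm'⟩ := p.asIdeal.exists_le_maximal hPprime.ne_top
    set m : Ideal A := m'.comap (φ₂ : A →+* B) with hmdef
    have hm : m.IsMaximal := aux_comap_isMaximal hA hB φ₂ m' hm'
    have hm'fix : (⟨m', hm'.isPrime⟩ : PrimeSpectrum B) ∈
        PrimeSpectrum.zeroLocus (J : Set B) := by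
      rw [PrimeSpectrum.mem_zeroLocus]
      exact fun x hx => hPm' (hp hx)
    obtain ⟨g, hg, n, hn1, h12, hpow⟩ := hcontr m hm _ hm'fix
    -- `g ∉ m'` hence `g ∉ p`.
    have hgP : g ∉ p.asIdeal := fun h => hg (hPm' h)
    set M : Submonoid B := Submonoid.powers g with hMdef
    set L : Type _ := Localization.Away g with hLdef
    have hdisjP : Disjoint (M : Set B) (p.asIdeal : Set B) := by
      rw [Set.disjoint_left]
      rintro x ⟨t, rfl⟩ hxP
      exact hgP (hPprime.mem_of_pow_mem _ hxP)
    have hdisjM' : Disjoint (M : Set B) (m' : Set B) := by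
      rw [Set.disjoint_left]
      rintro x ⟨t, rfl⟩ hxM
      exact hg (hm'.isPrime.mem_of_pow_mem _ hxM)
    haveI hpL : (Ideal.map (algebraMap B L) p.asIdeal).IsPrime :=
      IsLocalization.isPrime_of_isPrime_disjoint M L p.asIdeal hPprime hdisjP
    haveI hm'L : (Ideal.map (algebraMap B L) m').IsPrime :=
      IsLocalization.isPrime_of_isPrime_disjoint M L m' hm'.isPrime hdisjM'
    set π : L →+* L ⧸ (Ideal.map (algebraMap B L) p.asIdeal) :=
      Ideal.Quotient.mk (Ideal.map (algebraMap B L) p.asIdeal) with hπdef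
    haveI : IsDomain (L ⧸ (Ideal.map (algebraMap B L) p.asIdeal)) :=
      Ideal.Quotient.isDomain _
    haveI : IsNoetherianRing L :=
      IsLocalization.isNoetherianRing M L ‹IsNoetherianRing B›
    -- the two maps agree modulo `p`
    have hcompeq : π.comp ((algebraMap B L).comp (φ₁ : A →+* B)) =
        π.comp ((algebraMap B L).comp (φ₂ : A →+* B)) := by
      ext a
      simp only [RingHom.comp_apply]
      rw [Ideal.Quotient.mk_eq_mk_iff_sub_mem]
      rw [← map_sub]
      apply Ideal.mem_map_of_mem
      apply hp
      rw [hJ]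
      exact Ideal.subset_span ⟨a, rfl⟩
    set K : Ideal (L ⧸ (Ideal.map (algebraMap B L) p.asIdeal)) :=
      Ideal.map (π.comp ((algebraMap B L).comp (φ₂ : A →+* B))) m with hKdef
    have hKpow : K ^ n ≤ K ^ (n + 1) := by
      have h := Ideal.map_mono (f := π) hpow
      rw [Ideal.map_pow, Ideal.map_pow, Ideal.map_map, Ideal.map_map, hcompeq] at h
      exact h
    -- K is a proper ideal
    have hKne : K ≠ ⊤ := by
      intro htop
      have hsub : K ≤ Ideal.map π (Ideal.map (algebraMap B L) m') := by
        rw [hKdef, ← Ideal.map_map]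
        apply Ideal.map_mono
        rw [Ideal.map_le_iff_le_comap]
        intro a ha
        exact Ideal.mem_map_of_mem _ (Ideal.mem_comap.mp ha)
      have hne : Ideal.map π (Ideal.map (algebraMap B L) m') ≠ ⊤ := by
        intro h
        have hcomap : Ideal.comap π (Ideal.map π (Ideal.map (algebraMap B L) m')) = ⊤ := by
          rw [h, Ideal.comap_top]
        rw [Ideal.comap_map_of_surjective π Ideal.Quotient.mk_surjective,
          ← RingHom.ker_eq_comap_bot, Ideal.mk_ker,
          sup_eq_left.mpr (Ideal.map_mono hPm')] at hcomap
        exact hm'L.ne_top hcomap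
      exact hne (top_le_iff.mp (htop ▸ hsub))
    -- Nakayama: K = ⊥
    have hKbot : K = ⊥ := by
      have hfg : (K ^ n : Ideal _).FG := IsNoetherian.noetherian _
      have hle : (K ^ n : Ideal _) ≤ K • (K ^ n : Ideal _) := by
        rw [Ideal.smul_eq_mul]
        have hpows : K ^ (n + 1) = K * K ^ n := pow_succ' K n
        rw [← hpows]
        exact hKpow
      obtain ⟨r, hr1, hr0⟩ :=
        Submodule.exists_sub_one_mem_and_smul_eq_zero_of_fg_of_le_smul K (K ^ n) hfg hle
      by_contra hne
      obtain ⟨x, hxK, hx0⟩ := Submodule.exists_mem_ne_zero_of_ne_bot hne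
      have hxn : x ^ n ∈ K ^ n := Ideal.pow_mem_pow hxK n
      have hzero := hr0 (x ^ n) hxn
      rw [smul_eq_mul] at hzero
      rcases mul_eq_zero.mp hzero with h | h
      · apply hKne
        rw [Ideal.eq_top_iff_one]
        have hneg : -(1 : L ⧸ (Ideal.map (algebraMap B L) p.asIdeal)) ∈ K := by
          simpa [h] using hr1
        simpa using K.neg_mem hneg
      · exact hx0 (pow_eq_zero_iff (by omega) |>.mp h)
    -- hence `m ≤ φ₂⁻¹(p)`, so `φ₂⁻¹(p) = m` is maximal
    have hmq : m ≤ p.asIdeal.comap (φ₂ : A →+* B) := by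
      intro a ha
      have h1 : (π.comp ((algebraMap B L).comp (φ₂ : A →+* B))) a ∈ K :=
        Ideal.mem_map_of_mem _ ha
      rw [hKbot] at h1
      have h2 : algebraMap B L (φ₂ a) ∈ Ideal.map (algebraMap B L) p.asIdeal :=
        Ideal.Quotient.eq_zero_iff_mem.mp ((Submodule.mem_bot _).mp h1)
      have h3 := IsLocalization.comap_map_of_isPrime_disjoint M L (I := p.asIdeal) hPprime hdisjP
      rw [Ideal.mem_comap, ← h3]
      exact h2
    have hq : p.asIdeal.comap (φ₂ : A →+* B) = m :=
      le_antisymm (Ideal.comap_mono hPm') hmq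
    have hqmax : (p.asIdeal.comap (φ₂ : A →+* B)).IsMaximal := hq ▸ hm
    -- the fiber over `q` is finite, and contains all primes above `p`
    have hVfin : {r : PrimeSpectrum B | p.asIdeal ≤ r.asIdeal}.Finite := by
      apply (hqf (PrimeSpectrum.comap (φ₂ : A →+* B) p)).subset
      intro r hr
      simp only [Set.mem_preimage, Set.mem_singleton_iff]
      apply PrimeSpectrum.ext
      rw [PrimeSpectrum.comap_asIdeal, PrimeSpectrum.comap_asIdeal]
      have h1 : p.asIdeal.comap (φ₂ : A →+* B) ≤ r.asIdeal.comap (φ₂ : A →+* B) :=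
        Ideal.comap_mono hr
      exact (hqmax.eq_of_le (Ideal.comap_ne_top _ r.isPrime.ne_top) h1).symm
    -- hence finitely many maximal ideals above `p`
    have hMfin : {I : Ideal B | p.asIdeal ≤ I ∧ I.IsMaximal}.Finite := by
      apply (hVfin.image PrimeSpectrum.asIdeal).subset
      rintro I ⟨hle, hmax⟩
      exact ⟨⟨I, hmax.isPrime⟩, hle, rfl⟩
    -- Jacobson: p is the intersection of the maximal ideals above it
    have hjac : sInf {I : Ideal B | p.asIdeal ≤ I ∧ I.IsMaximal} = p.asIdeal := by
      have h1 : p.asIdeal.jacobson = p.asIdeal := by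
        rw [← Ideal.radical_eq_jacobson, hPprime.radical]
      exact h1
    have hsInfle : sInf {I : Ideal B | p.asIdeal ≤ I ∧ I.IsMaximal} ≤ p.asIdeal :=
      le_of_eq hjac
    rw [← hMfin.coe_toFinset, ← Finset.inf_id_eq_sInf, hPprime.inf_le'] at hsInfle
    obtain ⟨M₀, hM₀, hM₀le⟩ := hsInfle
    rw [hMfin.mem_toFinset] at hM₀
    have hM₀eq : M₀ = p.asIdeal := le_antisymm hM₀le hM₀.1
    exact hM₀eq ▸ hM₀.2
  -- Conclusion: the fixed locus consists of minimal primes of `J`, a finite set.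
  have hmin : (J.minimalPrimes).Finite := by
    rw [Ideal.minimalPrimes_eq_comap]
    exact (minimalPrimes.finite_of_isNoetherianRing (B ⧸ J)).image _
  have hsub : PrimeSpectrum.zeroLocus (J : Set B) ⊆
      PrimeSpectrum.asIdeal ⁻¹' J.minimalPrimes := by
    intro p hp
    have hJp : J ≤ p.asIdeal := by
      rw [PrimeSpectrum.mem_zeroLocus] at hp
      exact hp
    haveI := p.isPrime
    obtain ⟨r, hrmin, hrle⟩ := Ideal.exists_minimalPrimes_le hJp
    have hrprime : r.IsPrime := hrmin.1.1
    have hrfix : (⟨r, hrprime⟩ : PrimeSpectrum B) ∈ PrimeSpectrum.zeroLocus (J : Set B) := by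
      rw [PrimeSpectrum.mem_zeroLocus]
      exact hrmin.1.2
    have hrmax := key _ hrfix
    have hreq : r = p.asIdeal := hrmax.eq_of_le p.isPrime.ne_top hrle
    show p.asIdeal ∈ J.minimalPrimes
    rw [← hreq]
    exact hrmin
  apply Set.Finite.subset _ hsub
  apply hmin.preimage
  intro x _ y _ h
  exact PrimeSpectrum.ext h
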